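/- Let 0 ≤ j ≤ w ≤ k and suppose each φ_l is differentiable with Jacobian φ'_l satisfying ‖φ'_l(y)‖ ≤ 𝔟₀ for all y. Define the matrix J_{w,j} := ( ∏^{↶}_{l=j+1,…,w} V_lᵀ φ'_l(Φ_{l-1}) ) · ( I_{L_{j+1}} ⊗ φ_jᵀ ), where φ_0 := σ_a, φ_j := φ_j(Φ_{j-1}) for j ≥ 1, the arrow denotes the right-to-left ordered matrix product V_wᵀ φ'_w(Φ_{w-1}) ⋯ V_{j+1}ᵀ φ'_{j+1}(Φ_j) (equal to the identity when j = w), and ⊗ is the Kronecker product. Then ‖J_{w,j}‖ ≤ 𝔟₀^{w-j} ( ∏_{l=j+1}^{w} ‖V_l‖ ) · ( 𝔞₁^j ‖σ_a‖ ∏_{i=0}^{j-1} ‖V_i‖ + 𝔞₀ ∑_{i=1}^{j-1} ( 𝔞₁^{j-i} ∏_{l=i}^{j-1} ‖V_l‖ ) + 𝔞₀ ). -/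

import Mathlib

open scoped Matrix Matrix.Norms.L2Operator

/-- The linear map `x ↦ Aᵀ x` on Euclidean spaces, i.e. the action of the (transposed)
weight matrix `A` as in `Φⱼ = Vⱼᵀ φⱼ(Φⱼ₋₁)`. Its operator norm equals the spectral norm of `A`. -/
noncomputable def matCLM {a b : ℕ} (A : Matrix (Fin a) (Fin b) ℝ) :
    EuclideanSpace ℝ (Fin a) →L[ℝ] EuclideanSpace ℝ (Fin b) :=
  LinearMap.toContinuousLinearMap (Matrix.toEuclideanLin Aᵀ)

/-- The layer outputs of a fully-connected feedforward DNN: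
`Φ₀ = V₀ᵀ σₐ` and `Φⱼ = Vⱼᵀ φⱼ(Φⱼ₋₁)`. -/
noncomputable def dnnPhi (L : ℕ → ℕ)
    (V : (j : ℕ) → Matrix (Fin (L j)) (Fin (L (j+1))) ℝ)
    (σa : EuclideanSpace ℝ (Fin (L 0)))
    (φ : (j : ℕ) → EuclideanSpace ℝ (Fin (L j)) → EuclideanSpace ℝ (Fin (L j))) :
    (j : ℕ) → EuclideanSpace ℝ (Fin (L (j+1)))
  | 0 => matCLM (V 0) σa
  | (j+1) => matCLM (V (j+1)) (φ (j+1) (dnnPhi L V σa φ j))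

/-- `phiVec j` is the shorthand `φⱼ`: `φ₀ = σₐ` and `φⱼ = φⱼ(Φⱼ₋₁)` for `j ≥ 1`. -/
noncomputable def phiVec (L : ℕ → ℕ)
    (V : (j : ℕ) → Matrix (Fin (L j)) (Fin (L (j+1))) ℝ)
    (σa : EuclideanSpace ℝ (Fin (L 0)))
    (φ : (j : ℕ) → EuclideanSpace ℝ (Fin (L j)) → EuclideanSpace ℝ (Fin (L j))) :
    (j : ℕ) → EuclideanSpace ℝ (Fin (L j))
  | 0 => σa
  | (j+1) => φ (j+1) (dnnPhi L V σa φ j)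

/-- The right-to-left ordered product `∏↶_{l=j+1}^{w} Vₗᵀ φ'ₗ(Φₗ₋₁)`, as a continuous linear
map `ℝ^{L_{j+1}} → ℝ^{L_{w+1}}`; it is the identity when `w = j` (and junk for `w < j`). -/
noncomputable def ordProd (L : ℕ → ℕ)
    (V : (j : ℕ) → Matrix (Fin (L j)) (Fin (L (j+1))) ℝ)
    (σa : EuclideanSpace ℝ (Fin (L 0)))
    (φ : (j : ℕ) → EuclideanSpace ℝ (Fin (L j)) → EuclideanSpace ℝ (Fin (L j)))
    (j : ℕ) :
    (w : ℕ) → (EuclideanSpace ℝ (Fin (L (j+1))) →L[ℝ] EuclideanSpace ℝ (Fin (L (w+1))))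
  | 0 => if h : j = 0 then by subst h; exact ContinuousLinearMap.id ℝ _ else 0
  | (w+1) =>
      if h : j = w + 1 then by subst h; exact ContinuousLinearMap.id ℝ _
      else ((matCLM (V (w+1))).comp
              (fderiv ℝ (φ (w+1)) (dnnPhi L V σa φ w))).comp (ordProd L V σa φ j w)

lemma hnorm_sq {n : ℕ} (v : EuclideanSpace ℝ (Fin n)) : ‖v‖^2 = ∑ i, (v i)^2 := by
  rw [EuclideanSpace.norm_eq, Real.sq_sqrt (by positivity)]
  simp [sq_abs]

lemma hnorm_sq' {n m : ℕ} (v : EuclideanSpace ℝ (Fin n × Fin m)) : ‖v‖^2 = ∑ p, (v p)^2 := by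
  rw [EuclideanSpace.norm_eq, Real.sq_sqrt (by positivity)]
  simp [sq_abs]

lemma kron_norm_le {a b : ℕ} (c : EuclideanSpace ℝ (Fin b)) :
    ‖LinearMap.toContinuousLinearMap (Matrix.toEuclideanLin
      (Matrix.of (fun (i : Fin a) (p : Fin a × Fin b) =>
        if i = p.1 then c p.2 else (0:ℝ))))‖ ≤ ‖c‖ := by
  refine ContinuousLinearMap.opNorm_le_bound _ (norm_nonneg c) fun x => ?_
  set M := Matrix.of (fun (i : Fin a) (p : Fin a × Fin b) =>
        if i = p.1 then c p.2 else (0:ℝ))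
  set y : EuclideanSpace ℝ (Fin a) := LinearMap.toContinuousLinearMap (Matrix.toEuclideanLin M) x
  have hy : ∀ i, y i = ∑ bb : Fin b, c bb * x (i, bb) := by
    intro i
    show (Matrix.toEuclideanLin M x) i = _
    rw [Matrix.toEuclideanLin_apply]
    simp only [Matrix.mulVec, dotProduct]
    rw [Fintype.sum_prod_type]
    simp [M, Finset.sum_ite_eq]
  have hsq : ‖y‖^2 ≤ (‖c‖ * ‖x‖)^2 := by
    rw [hnorm_sq y, mul_pow, hnorm_sq c, hnorm_sq' x, Fintype.sum_prod_type, Finset.mul_sum]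
    refine Finset.sum_le_sum fun i _ => ?_
    rw [hy i]
    exact Finset.sum_mul_sq_le_sq_mul_sq _ _ _
  calc ‖y‖ = Real.sqrt (‖y‖^2) := (Real.sqrt_sq (norm_nonneg y)).symm
    _ ≤ Real.sqrt ((‖c‖*‖x‖)^2) := Real.sqrt_le_sqrt hsq
    _ = ‖c‖ * ‖x‖ := Real.sqrt_sq (by positivity)

lemma matCLM_norm {a b : ℕ} (A : Matrix (Fin a) (Fin b) ℝ) : ‖matCLM A‖ = ‖A‖ := by
  have h1 : ‖matCLM A‖ = ‖Aᵀ‖ := (Matrix.l2_opNorm_def Aᵀ).symm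
  rw [h1, ← Matrix.conjTranspose_eq_transpose_of_trivial, Matrix.l2_opNorm_conjTranspose]

lemma ordProd_self (L V σa φ) (j : ℕ) :
    ordProd L V σa φ j j = ContinuousLinearMap.id ℝ _ := by
  cases j with
  | zero => simp [ordProd]
  | succ m => simp [ordProd]

lemma ordProd_norm_le (k : ℕ) (L : ℕ → ℕ)
    (V : (j : ℕ) → Matrix (Fin (L j)) (Fin (L (j+1))) ℝ)
    (σa : EuclideanSpace ℝ (Fin (L 0)))
    (φ : (j : ℕ) → EuclideanSpace ℝ (Fin (L j)) → EuclideanSpace ℝ (Fin (L j)))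
    (𝔟₀ : ℝ) (hb0 : 0 ≤ 𝔟₀)
    (hφ' : ∀ l, 1 ≤ l → l ≤ k → ∀ y, ‖fderiv ℝ (φ l) y‖ ≤ 𝔟₀)
    (j w : ℕ) (hjw : j ≤ w) (hwk : w ≤ k) :
    ‖ordProd L V σa φ j w‖ ≤ 𝔟₀ ^ (w - j) * ∏ l ∈ Finset.Icc (j+1) w, ‖V l‖ := by
  induction w, hjw using Nat.le_induction with
  | base =>
    rw [ordProd_self]
    simp only [Nat.sub_self, pow_zero, Finset.Icc_self]
    have : Finset.Icc (j+1) j = ∅ := by rw [Finset.Icc_eq_empty]; omega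
    rw [this, Finset.prod_empty, mul_one]
    exact ContinuousLinearMap.norm_id_le
  | succ w hjw ih =>
    have ih' := ih (by omega)
    have hne : ¬ (j = w + 1) := by omega
    rw [ordProd, dif_neg hne]
    calc ‖((matCLM (V (w+1))).comp (fderiv ℝ (φ (w+1)) (dnnPhi L V σa φ w))).comp
            (ordProd L V σa φ j w)‖
        ≤ ‖(matCLM (V (w+1))).comp (fderiv ℝ (φ (w+1)) (dnnPhi L V σa φ w))‖ *
            ‖ordProd L V σa φ j w‖ := ContinuousLinearMap.opNorm_comp_le _ _
      _ ≤ (‖V (w+1)‖ * 𝔟₀) * (𝔟₀ ^ (w - j) * ∏ l ∈ Finset.Icc (j+1) w, ‖V l‖) := by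
          refine mul_le_mul ?_ ih' (norm_nonneg _) (by positivity)
          calc ‖(matCLM (V (w+1))).comp (fderiv ℝ (φ (w+1)) (dnnPhi L V σa φ w))‖
              ≤ ‖matCLM (V (w+1))‖ * ‖fderiv ℝ (φ (w+1)) (dnnPhi L V σa φ w)‖ :=
                ContinuousLinearMap.opNorm_comp_le _ _
            _ ≤ ‖V (w+1)‖ * 𝔟₀ := by
                rw [matCLM_norm]
                exact mul_le_mul_of_nonneg_left
                  (hφ' (w+1) (by omega) hwk _) (norm_nonneg _)
      _ = 𝔟₀ ^ (w + 1 - j) * ∏ l ∈ Finset.Icc (j+1) (w+1), ‖V l‖ := by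
          rw [Finset.prod_Icc_succ_top (by omega : j + 1 ≤ w + 1)]
          have : w + 1 - j = (w - j) + 1 := by omega
          rw [this, pow_succ]
          ring

noncomputable def Bb (a₀ a₁ s : ℝ) (f : ℕ → ℝ) (j : ℕ) : ℝ :=
  a₁ ^ j * s * (∏ i ∈ Finset.range j, f i)
    + a₀ * ∑ i ∈ Finset.Icc 1 (j-1), (a₁ ^ (j - i) * ∏ l ∈ Finset.Icc i (j-1), f l)
    + a₀

lemma Bb_succ (a₀ a₁ s : ℝ) (f : ℕ → ℝ) (m : ℕ) :
    Bb a₀ a₁ s f (m+2) = a₁ * f (m+1) * Bb a₀ a₁ s f (m+1) + a₀ := by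
  unfold Bb
  simp only [show m+2-1=m+1 from rfl, show m+1-1=m from rfl]
  rw [Finset.prod_range_succ, Finset.sum_Icc_succ_top (by omega : 1 ≤ m + 1)]
  have hs : ∑ i ∈ Finset.Icc 1 m, (a₁ ^ (m + 2 - i) * ∏ l ∈ Finset.Icc i (m+1), f l)
      = a₁ * f (m+1) * ∑ i ∈ Finset.Icc 1 m, (a₁ ^ (m + 1 - i) * ∏ l ∈ Finset.Icc i m, f l) := by
    rw [Finset.mul_sum]
    refine Finset.sum_congr rfl fun i hi => ?_
    obtain ⟨h1, h2⟩ := Finset.mem_Icc.mp hi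
    rw [Finset.prod_Icc_succ_top (by omega : i ≤ m + 1)]
    have h3 : m + 2 - i = (m + 1 - i) + 1 := by omega
    rw [h3, pow_succ]
    ring
  rw [hs]
  have h4 : m + 2 - (m + 1) = 1 := by omega
  rw [h4]
  have h5 : Finset.Icc (m+1) (m+1) = {m+1} := Finset.Icc_self _
  rw [h5, Finset.prod_singleton]
  ring

lemma dnnPhi_eq (L V σa φ) (j : ℕ) :
    dnnPhi L V σa φ j = matCLM (V j) (phiVec L V σa φ j) := by
  cases j <;> rfl

lemma phiVec_norm_le (k : ℕ) (L : ℕ → ℕ)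
    (V : (j : ℕ) → Matrix (Fin (L j)) (Fin (L (j+1))) ℝ)
    (σa : EuclideanSpace ℝ (Fin (L 0)))
    (φ : (j : ℕ) → EuclideanSpace ℝ (Fin (L j)) → EuclideanSpace ℝ (Fin (L j)))
    (a₀ a₁ : ℝ) (ha0 : 0 < a₀) (ha1 : 0 ≤ a₁)
    (hφ : ∀ l, 1 ≤ l → l ≤ k → ∀ y, ‖φ l y‖ ≤ a₁ * ‖y‖ + a₀)
    (j : ℕ) (hj : j ≤ k) :
    ‖phiVec L V σa φ j‖ ≤ Bb a₀ a₁ ‖σa‖ (fun i => ‖V i‖) j := by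
  induction j with
  | zero =>
    show ‖σa‖ ≤ _
    simp [Bb]
    linarith
  | succ j ih =>
    have h1 : ‖phiVec L V σa φ (j+1)‖ ≤ a₁ * ‖dnnPhi L V σa φ j‖ + a₀ :=
      hφ (j+1) (by omega) hj _
    have h2 : ‖dnnPhi L V σa φ j‖ ≤ ‖V j‖ * ‖phiVec L V σa φ j‖ := by
      rw [dnnPhi_eq, ← matCLM_norm (V j)]
      exact (matCLM (V j)).le_opNorm _
    have h3 : a₁ * ‖dnnPhi L V σa φ j‖ ≤ a₁ * (‖V j‖ * ‖phiVec L V σa φ j‖) :=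
      mul_le_mul_of_nonneg_left h2 ha1
    cases j with
    | zero =>
      have : phiVec L V σa φ 0 = σa := rfl
      rw [this] at h3
      calc ‖phiVec L V σa φ 1‖ ≤ a₁ * ‖dnnPhi L V σa φ 0‖ + a₀ := h1
        _ ≤ a₁ * (‖V 0‖ * ‖σa‖) + a₀ := by linarith
        _ = Bb a₀ a₁ ‖σa‖ (fun i => ‖V i‖) 1 := by
            simp [Bb]
            ring
    | succ m =>
      have ih' := ih (by omega)
      rw [Bb_succ]
      have h4 : a₁ * (‖V (m+1)‖ * ‖phiVec L V σa φ (m+1)‖)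
          ≤ a₁ * (‖V (m+1)‖ * Bb a₀ a₁ ‖σa‖ (fun i => ‖V i‖) (m+1)) :=
        mul_le_mul_of_nonneg_left
          (mul_le_mul_of_nonneg_left ih' (norm_nonneg _)) ha1
      calc ‖phiVec L V σa φ (m+2)‖ ≤ a₁ * ‖dnnPhi L V σa φ (m+1)‖ + a₀ := h1
        _ ≤ a₁ * ‖V (m+1)‖ * Bb a₀ a₁ ‖σa‖ (fun i => ‖V i‖) (m+1) + a₀ := by
            rw [mul_assoc]; linarith

/-- For `0 ≤ j ≤ w ≤ k`, with `‖φ'ₗ(y)‖ ≤ 𝔟₀`, the matrix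
`J_{w,j} = (∏↶_{l=j+1}^{w} Vₗᵀ φ'ₗ(Φₗ₋₁)) (I_{L_{j+1}} ⊗ φⱼᵀ)` (acting `ℝ^{L_{j+1}·L_j} → ℝ^{L_{w+1}}`)
satisfies `‖J_{w,j}‖ ≤ 𝔟₀^{w-j} (∏_{l=j+1}^{w} ‖Vₗ‖) (𝔞₁^j ‖σₐ‖ ∏_{i=0}^{j-1} ‖Vᵢ‖
+ 𝔞₀ ∑_{i=1}^{j-1} (𝔞₁^{j-i} ∏_{l=i}^{j-1} ‖Vₗ‖) + 𝔞₀)`. -/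
theorem dnn_jacobian_block_norm_bound
    (k : ℕ) (hk : 1 ≤ k) (L : ℕ → ℕ)
    (V : (j : ℕ) → Matrix (Fin (L j)) (Fin (L (j+1))) ℝ)
    (σa : EuclideanSpace ℝ (Fin (L 0)))
    (φ : (j : ℕ) → EuclideanSpace ℝ (Fin (L j)) → EuclideanSpace ℝ (Fin (L j)))
    (𝔞₀ 𝔞₁ 𝔟₀ : ℝ) (ha0 : 0 < 𝔞₀) (ha1 : 0 ≤ 𝔞₁) (hb0 : 0 < 𝔟₀)
    (hφdiff : ∀ l, 1 ≤ l → l ≤ k → Differentiable ℝ (φ l))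
    (hφ : ∀ l, 1 ≤ l → l ≤ k → ∀ y, ‖φ l y‖ ≤ 𝔞₁ * ‖y‖ + 𝔞₀)
    (hφ' : ∀ l, 1 ≤ l → l ≤ k → ∀ y, ‖fderiv ℝ (φ l) y‖ ≤ 𝔟₀)
    (j w : ℕ) (hjw : j ≤ w) (hwk : w ≤ k) :
    ‖(ordProd L V σa φ j w).comp
        (LinearMap.toContinuousLinearMap (Matrix.toEuclideanLin
          (Matrix.of (fun (i : Fin (L (j+1))) (p : Fin (L (j+1)) × Fin (L j)) =>
            if i = p.1 then phiVec L V σa φ j p.2 else (0 : ℝ)))))‖ ≤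
      𝔟₀ ^ (w - j) * (∏ l ∈ Finset.Icc (j+1) w, ‖V l‖) *
        (𝔞₁ ^ j * ‖σa‖ * (∏ i ∈ Finset.range j, ‖V i‖)
          + 𝔞₀ * ∑ i ∈ Finset.Icc 1 (j-1), (𝔞₁ ^ (j - i) * ∏ l ∈ Finset.Icc i (j-1), ‖V l‖)
          + 𝔞₀) := by
  calc ‖(ordProd L V σa φ j w).comp
        (LinearMap.toContinuousLinearMap (Matrix.toEuclideanLin
          (Matrix.of (fun (i : Fin (L (j+1))) (p : Fin (L (j+1)) × Fin (L j)) =>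
            if i = p.1 then phiVec L V σa φ j p.2 else (0 : ℝ)))))‖
      ≤ ‖ordProd L V σa φ j w‖ *
          ‖LinearMap.toContinuousLinearMap (Matrix.toEuclideanLin
            (Matrix.of (fun (i : Fin (L (j+1))) (p : Fin (L (j+1)) × Fin (L j)) =>
              if i = p.1 then phiVec L V σa φ j p.2 else (0 : ℝ))))‖ :=
        ContinuousLinearMap.opNorm_comp_le _ _
    _ ≤ (𝔟₀ ^ (w - j) * ∏ l ∈ Finset.Icc (j+1) w, ‖V l‖) *
          Bb 𝔞₀ 𝔞₁ ‖σa‖ (fun i => ‖V i‖) j := by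
        refine mul_le_mul (ordProd_norm_le k L V σa φ 𝔟₀ hb0.le hφ' j w hjw hwk)
          (le_trans (kron_norm_le _)
            (phiVec_norm_le k L V σa φ 𝔞₀ 𝔞₁ ha0 ha1 hφ j (le_trans hjw hwk)))
          (norm_nonneg _) (mul_nonneg (pow_nonneg hb0.le _) (Finset.prod_nonneg fun _ _ => norm_nonneg _))
    _ = _ := by
        simp only [Bb]
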